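/- For any simple stationary point process with intensity λ whose nearest-point distance R satisfies P(R < x) ~ λπx² as x → 0, and fading h ≥ 0 with E(h^δ) < ∞ independent of R, the received signal power S = hR^{-α} has tail P(S > θ) ~ λπE(h^δ)θ^{-δ} as θ → ∞, where δ = 2/α. -/

import Mathlib

open MeasureTheory ProbabilityTheory Real Filter Set

/-- For a simple stationary point process of intensity λ whose nearest-point distance R
satisfies P(R < x) ~ λπx² as x → 0⁺ (with the global bound P(R < x) ≤ Cx²), and
independent fading h ≥ 0 with E(h^δ) < ∞, the received signal power S = hR^{-α} has
tail P(S > θ) ~ λπ E(h^δ) θ^{-δ} as θ → ∞, where δ = 2/α. -/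
theorem stmt18
    {Ω : Type*} [MeasureSpace Ω] [IsProbabilityMeasure (ℙ : Measure Ω)]
    (lam α δ : ℝ) (hlam : 0 < lam) (hα : 2 < α) (hδ : δ = 2 / α)
    (R h : Ω → ℝ) (hRmeas : Measurable R) (hhmeas : Measurable h)
    (hRpos : ∀ ω, 0 < R ω) (hhnn : ∀ ω, 0 ≤ h ω)
    (hindep : IndepFun h R (ℙ : Measure Ω))
    (hhint : Integrable (fun ω => h ω ^ δ) (ℙ : Measure Ω))
    (htail : Tendsto (fun x : ℝ => (ℙ {ω | R ω < x}).toReal / (lam * π * x ^ 2))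
        (nhdsWithin 0 (Ioi 0)) (nhds 1))
    (C : ℝ) (hbound : ∀ x : ℝ, 0 < x → (ℙ {ω | R ω < x}).toReal ≤ C * x ^ 2) :
    Tendsto (fun θ : ℝ => θ ^ δ * (ℙ {ω | θ < h ω * R ω ^ (-α)}).toReal)
      atTop (nhds (lam * π * ∫ ω, h ω ^ δ)) := by
  have hαpos : (0:ℝ) < α := by linarith
  have hδpos : 0 < δ := by rw [hδ]; positivity
  have hαinv : (0:ℝ) < α⁻¹ := inv_pos.2 hαpos
  set ν : Measure ℝ := Measure.map R ℙ with hν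
  set μ : Measure ℝ := Measure.map h ℙ with hμ
  haveI : IsProbabilityMeasure ν := Measure.isProbabilityMeasure_map hRmeas.aemeasurable
  haveI : IsProbabilityMeasure μ := Measure.isProbabilityMeasure_map hhmeas.aemeasurable
  have hmap : Measure.map (fun ω => (h ω, R ω)) ℙ = μ.prod ν :=
    (indepFun_iff_map_prod_eq_prod_map_map hhmeas.aemeasurable hRmeas.aemeasurable).mp hindep
  have hFν : ∀ c : ℝ, ℙ {ω | R ω < c} = ν (Iio c) := by
    intro c
    rw [hν, Measure.map_apply hRmeas measurableSet_Iio]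
    rfl
  set F : ℝ → ℝ := fun c => (ν (Iio c)).toReal with hFdef
  have hFmono : Monotone (fun c : ℝ => ν (Iio c)) :=
    fun a b hab => measure_mono (Iio_subset_Iio hab)
  have hcdfmeas : Measurable fun c : ℝ => ν (Iio c) := hFmono.measurable
  have hFmeas : Measurable F := hcdfmeas.ennreal_toReal
  have hFnonneg : ∀ c, 0 ≤ F c := fun c => ENNReal.toReal_nonneg
  have hF0 : F 0 = 0 := by
    have h0 : {ω | R ω < (0:ℝ)} = ∅ := by
      ext ω; simp [not_lt.2 (hRpos ω).le]
    simp only [hFdef, ← hFν 0, h0, measure_empty, ENNReal.toReal_zero]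
  have htail' : Tendsto (fun x : ℝ => F x / (lam * π * x ^ 2))
      (nhdsWithin 0 (Ioi 0)) (nhds 1) := by
    refine htail.congr fun x => ?_
    rw [hFν]
  have hbound' : ∀ x : ℝ, 0 < x → F x ≤ C * x ^ 2 := by
    intro x hx
    have := hbound x hx
    rwa [hFν] at this
  -- the square identity
  have hsq : ∀ y : ℝ, 0 ≤ y → ((y : ℝ) ^ α⁻¹) ^ 2 = y ^ δ := by
    intro y hy
    rw [← Real.rpow_natCast (y ^ α⁻¹) 2, ← Real.rpow_mul hy]
    congr 1
    rw [hδ]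
    push_cast
    field_simp
  -- event rewriting
  have hevent : ∀ θ : ℝ, 0 < θ →
      {ω | θ < h ω * R ω ^ (-α)} = {ω | R ω < (h ω / θ) ^ α⁻¹} := by
    intro θ hθ
    ext ω
    simp only [mem_setOf_eq]
    rw [Real.lt_rpow_inv_iff_of_pos (hRpos ω).le (div_nonneg (hhnn ω) hθ.le) hαpos,
      Real.rpow_neg (hRpos ω).le, ← div_eq_mul_inv,
      lt_div_iff₀ (Real.rpow_pos_of_pos (hRpos ω) α), lt_div_iff₀ hθ]
    constructor <;> intro h' <;> linarith [mul_comm θ (R ω ^ α), mul_comm (R ω ^ α) θ]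
  -- probability as an integral over the fading law
  have hprob : ∀ θ : ℝ, 0 < θ →
      (ℙ {ω | θ < h ω * R ω ^ (-α)}).toReal = ∫ x, F ((x / θ) ^ α⁻¹) ∂μ := by
    intro θ hθ
    have hg : Measurable fun x : ℝ => (x / θ) ^ α⁻¹ :=
      (Real.continuous_rpow_const hαinv.le).measurable.comp (measurable_id.div_const θ)
    have hS : MeasurableSet {p : ℝ × ℝ | p.2 < (p.1 / θ) ^ α⁻¹} :=
      measurableSet_lt measurable_snd (hg.comp measurable_fst)
    have h1 : {ω | θ < h ω * R ω ^ (-α)} =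
        (fun ω => (h ω, R ω)) ⁻¹' {p : ℝ × ℝ | p.2 < (p.1 / θ) ^ α⁻¹} := by
      rw [hevent θ hθ]; rfl
    rw [h1, ← Measure.map_apply (hhmeas.prodMk hRmeas) hS, hmap, Measure.prod_apply hS]
    have h2 : ∀ x : ℝ,
        (Prod.mk x ⁻¹' {p : ℝ × ℝ | p.2 < (p.1 / θ) ^ α⁻¹}) = Iio ((x / θ) ^ α⁻¹) :=
      fun x => rfl
    simp only [h2]
    exact (integral_toReal ((hcdfmeas.comp hg).aemeasurable)
      (ae_of_all _ fun x => measure_lt_top ν _)).symm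
  -- nonnegativity of fading a.e. under μ
  have hμnn : ∀ᵐ x ∂μ, 0 ≤ x := by
    rw [hμ]
    exact (ae_map_iff hhmeas.aemeasurable (measurableSet_Ici : MeasurableSet (Ici (0:ℝ)))).mpr
      (ae_of_all _ hhnn)
  -- integrability of x ↦ x ^ δ under μ
  have hint2 : Integrable (fun x : ℝ => x ^ δ) μ := by
    rw [hμ, integrable_map_measure
      ((Real.continuous_rpow_const hδpos.le).measurable.aestronglyMeasurable)
      hhmeas.aemeasurable]
    exact hhint
  -- dominated convergence
  have key : Tendsto (fun θ : ℝ => ∫ x, θ ^ δ * F ((x / θ) ^ α⁻¹) ∂μ)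
      atTop (nhds (∫ x, lam * π * x ^ δ ∂μ)) := by
    refine tendsto_integral_filter_of_dominated_convergence (fun x => C * x ^ δ) ?_ ?_ ?_ ?_
    · refine Eventually.of_forall fun θ => ?_
      exact ((hFmeas.comp ((Real.continuous_rpow_const hαinv.le).measurable.comp
        (measurable_id.div_const θ))).const_mul _).aestronglyMeasurable
    · filter_upwards [eventually_gt_atTop (0:ℝ)] with θ hθ
      filter_upwards [hμnn] with x hx
      have hθδ : 0 < θ ^ δ := Real.rpow_pos_of_pos hθ δ
      rcases hx.lt_or_eq with hxpos | hx0
      · have hT : 0 < (x / θ) ^ α⁻¹ := Real.rpow_pos_of_pos (div_pos hxpos hθ) _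
        have hb := hbound' _ hT
        have hsq2 : ((x / θ) ^ α⁻¹) ^ 2 = x ^ δ / θ ^ δ := by
          rw [hsq _ (div_pos hxpos hθ).le, Real.div_rpow hxpos.le hθ.le]
        rw [hsq2] at hb
        have hnorm : ‖θ ^ δ * F ((x / θ) ^ α⁻¹)‖ = θ ^ δ * F ((x / θ) ^ α⁻¹) := by
          rw [Real.norm_of_nonneg (mul_nonneg hθδ.le (hFnonneg _))]
        rw [hnorm]
        calc θ ^ δ * F ((x / θ) ^ α⁻¹) ≤ θ ^ δ * (C * (x ^ δ / θ ^ δ)) :=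
              mul_le_mul_of_nonneg_left hb hθδ.le
          _ = C * x ^ δ := by field_simp
      · rw [← hx0]
        simp [zero_div, Real.zero_rpow hαinv.ne', hF0, Real.zero_rpow hδpos.ne']
    · exact hint2.const_mul C
    · filter_upwards [hμnn] with x hx
      rcases hx.lt_or_eq with hxpos | hx0
      · -- x > 0
        have hT : Tendsto (fun θ : ℝ => (x / θ) ^ α⁻¹) atTop (nhdsWithin 0 (Ioi 0)) := by
          apply tendsto_nhdsWithin_of_tendsto_nhds_of_eventually_within
          · have h1 : Tendsto (fun θ : ℝ => x / θ) atTop (nhds 0) := by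
              simpa [div_eq_mul_inv] using tendsto_inv_atTop_zero.const_mul x
            have h2 : ContinuousAt (fun y : ℝ => y ^ α⁻¹) 0 :=
              Real.continuousAt_rpow_const 0 α⁻¹ (Or.inr hαinv.le)
            have := h2.tendsto.comp h1
            simpa [Function.comp_def, Real.zero_rpow hαinv.ne'] using this
          · filter_upwards [eventually_gt_atTop (0:ℝ)] with θ hθ
            exact Real.rpow_pos_of_pos (div_pos hxpos hθ) _
        have h3 : Tendsto
            (fun θ : ℝ => F ((x / θ) ^ α⁻¹) / (lam * π * ((x / θ) ^ α⁻¹) ^ 2))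
            atTop (nhds 1) := htail'.comp hT
        have h4 := h3.const_mul (lam * π * x ^ δ)
        rw [mul_one] at h4
        refine Tendsto.congr' ?_ h4
        filter_upwards [eventually_gt_atTop (0:ℝ)] with θ hθ
        have hθδ : 0 < θ ^ δ := Real.rpow_pos_of_pos hθ δ
        have hxδ : 0 < x ^ δ := Real.rpow_pos_of_pos hxpos δ
        have hsq2 : ((x / θ) ^ α⁻¹) ^ 2 = x ^ δ / θ ^ δ := by
          rw [hsq _ (div_pos hxpos hθ).le, Real.div_rpow hxpos.le hθ.le]
        rw [hsq2]
        have hπ : (0:ℝ) < π := Real.pi_pos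
        field_simp
      · -- x = 0
        rw [← hx0]
        have : (fun θ : ℝ => θ ^ δ * F (((0:ℝ) / θ) ^ α⁻¹)) = fun _ => (0:ℝ) := by
          funext θ
          simp [zero_div, Real.zero_rpow hαinv.ne', hF0]
        rw [this, Real.zero_rpow hδpos.ne', mul_zero]
        exact tendsto_const_nhds
  -- identify the limit
  have hlimit : ∫ x, lam * π * x ^ δ ∂μ = lam * π * ∫ ω, h ω ^ δ := by
    rw [MeasureTheory.integral_const_mul]
    congr 1
    rw [hμ, integral_map hhmeas.aemeasurable
      ((Real.continuous_rpow_const hδpos.le).measurable.aestronglyMeasurable)]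
  rw [hlimit] at key
  refine Tendsto.congr' ?_ key
  filter_upwards [eventually_gt_atTop (0:ℝ)] with θ hθ
  rw [hprob θ hθ, MeasureTheory.integral_const_mul]
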